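/- Let B be an integral domain with an action of the group H = {e, σ} of order 2, where σ acts nontrivially, and let A = B^H be the invariant subring. Assume 2 is invertible in B. Let 𝔭 be a height-one prime of A such that there is exactly one prime 𝔭' of B lying over 𝔭, with B_{𝔭'} a discrete valuation ring with valuation v, and such that A_𝔭 is a discrete valuation ring whose maximal ideal is generated by an element s ∈ A. Assume σ acts trivially on B/𝔭'. Then v(s) = 2. -/

import Mathlib

open IsDiscreteValuationRing

private lemma addVal_ringEquiv {R : Type*} [CommRing R] [IsDomain R] [IsDiscreteValuationRing R]
    (φ : R ≃+* R) (x : R) : addVal R (φ x) = addVal R x := by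
  by_cases hx : x = 0
  · simp [hx, addVal_zero]
  obtain ⟨ϖ, hϖ⟩ := exists_irreducible R
  obtain ⟨n, u, rfl⟩ := eq_unit_mul_pow_irreducible hx hϖ
  rw [addVal_def' u hϖ n]
  exact addVal_def _ (Units.map (φ : R →+* R).toMonoidHom u)
    ((MulEquiv.irreducible_iff φ).mpr hϖ) n (by simp)

private lemma addVal_of_isUnit {R : Type*} [CommRing R] [IsDomain R] [IsDiscreteValuationRing R]
    {x : R} (h : IsUnit x) : addVal R x = 0 := by
  obtain ⟨ϖ, hϖ⟩ := exists_irreducible R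
  simpa using addVal_def x h.unit hϖ 0 (by simp)

private lemma one_le_addVal_of_not_isUnit {R : Type*} [CommRing R] [IsDomain R]
    [IsDiscreteValuationRing R] {x : R} (h : ¬ IsUnit x) : 1 ≤ addVal R x := by
  obtain ⟨ϖ, hϖ⟩ := exists_irreducible R
  have hx : x ∈ IsLocalRing.maximalIdeal R := (IsLocalRing.mem_maximalIdeal x).mpr h
  rw [hϖ.maximalIdeal_eq, Ideal.mem_span_singleton] at hx
  calc (1:ℕ∞) = addVal R ϖ := (addVal_uniformizer hϖ).symm
  _ ≤ addVal R x := addVal_le_iff_dvd.mpr hx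

private lemma irreducible_of_addVal_eq_one {R : Type*} [CommRing R] [IsDomain R]
    [IsDiscreteValuationRing R] {x : R} (h : addVal R x = 1) : Irreducible x := by
  have hx : x ≠ 0 := by
    intro h0
    rw [h0, addVal_zero] at h
    simp at h
  obtain ⟨ϖ, hϖ⟩ := exists_irreducible R
  obtain ⟨n, u, rfl⟩ := eq_unit_mul_pow_irreducible hx hϖ
  rw [addVal_def' u hϖ n] at h
  have hn : n = 1 := by exact_mod_cast h
  subst hn
  rw [pow_one]
  exact Associated.irreducible ⟨u, mul_comm _ _⟩ hϖ



/-- The subring of invariants of a ring involution `σ` (the invariant ring `A = B^H` for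
the order-2 group `H = {e, σ}`). -/
def invariantSubring {B : Type*} [CommRing B] (σ : B ≃+* B) : Subring B :=
  RingHom.eqLocus (σ : B →+* B) (RingHom.id B)

/-- Let `B` be an integral domain with an action of `H = {e, σ}` of order 2,
`σ` acting nontrivially, `A = B^H`, and `2` invertible in `B`.  Let `𝔭` be a (height-one)
prime of `A` such that exactly one prime `𝔭'` of `B` lies over `𝔭`, with `B_{𝔭'}` a
discrete valuation ring (with normalized additive valuation `addVal`), and such that `A_𝔭`
is a discrete valuation ring whose maximal ideal is generated by `s ∈ A`.  Assume `σ` acts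
trivially on `B/𝔭'`.  Then `v(s) = 2`. -/
theorem stmt_0 {B : Type*} [CommRing B] [IsDomain B]
    (σ : B ≃+* B) (hinv : ∀ b, σ (σ b) = b) (hnontriv : ∃ b, σ b ≠ b)
    (h2 : IsUnit (2 : B))
    (A : Subring B) (hA : A = invariantSubring σ)
    (𝔭 : Ideal A) (h𝔭 : 𝔭.IsPrime)
    (𝔭' : Ideal B) (h𝔭' : 𝔭'.IsPrime)
    (hover : 𝔭'.comap A.subtype = 𝔭)
    (huniq : ∀ q : Ideal B, q.IsPrime → q.comap A.subtype = 𝔭 → q = 𝔭')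
    (htriv : ∀ b : B, σ b - b ∈ 𝔭')
    (Ap : Type*) [CommRing Ap] [IsDomain Ap] [Algebra A Ap]
    [IsLocalization.AtPrime Ap 𝔭] [IsDiscreteValuationRing Ap]
    (Bp : Type*) [CommRing Bp] [IsDomain Bp] [Algebra B Bp]
    [IsLocalization.AtPrime Bp 𝔭'] [IsDiscreteValuationRing Bp]
    (s : A) (hs : IsLocalRing.maximalIdeal Ap = Ideal.span {algebraMap A Ap s}) :
    IsDiscreteValuationRing.addVal Bp (algebraMap B Bp (s : B)) = 2 := by
  classical
  have hfix' : ∀ b : B, b ∈ A → σ b = b := fun b hb => by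
    rw [hA] at hb
    exact hb
  have hfix : ∀ a : A, σ (a : B) = (a : B) := fun a => hfix' _ a.2
  -- σ preserves 𝔭'
  have hσp : ∀ b : B, σ b ∈ 𝔭' ↔ b ∈ 𝔭' := by
    have hq : Ideal.comap (σ : B →+* B) 𝔭' = 𝔭' := by
      refine huniq _ (Ideal.IsPrime.comap _) ?_
      rw [← hover]
      ext x
      simp only [Ideal.mem_comap, Subring.coe_subtype]
      rw [show ((σ : B →+* B) (x : B)) = σ (x : B) from rfl, hfix x]
    intro b
    conv_rhs => rw [← hq]
    exact Iff.rfl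
  -- lift σ to the localization
  have hmap : (𝔭'.primeCompl).map (σ : B ≃+* B).toMonoidHom = 𝔭'.primeCompl := by
    ext x
    simp only [Submonoid.mem_map]
    constructor
    · rintro ⟨y, hy, rfl⟩
      exact fun hmem => hy ((hσp y).mp hmem)
    · intro hx
      refine ⟨σ x, fun hmem => hx ?_, hinv x⟩
      have h := (hσp (σ x)).mpr hmem
      rwa [hinv] at h
  set φ : Bp ≃+* Bp := IsLocalization.ringEquivOfRingEquiv Bp Bp σ hmap with hφdef
  have hφ : ∀ b : B, φ (algebraMap B Bp b) = algebraMap B Bp (σ b) := fun b =>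
    IsLocalization.ringEquivOfRingEquiv_eq hmap b
  have injB : Function.Injective (algebraMap B Bp) :=
    IsLocalization.injective Bp 𝔭'.primeCompl_le_nonZeroDivisors
  have injA : Function.Injective (algebraMap A Ap) :=
    IsLocalization.injective Ap 𝔭.primeCompl_le_nonZeroDivisors
  have hvσ : ∀ b : B, addVal Bp (algebraMap B Bp (σ b)) = addVal Bp (algebraMap B Bp b) :=
    fun b => by rw [← hφ b]; exact addVal_ringEquiv φ _
  have hunit0 : ∀ t : B, t ∉ 𝔭' → addVal Bp (algebraMap B Bp t) = 0 := fun t ht =>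
    addVal_of_isUnit ((IsLocalization.AtPrime.isUnit_to_map_iff Bp 𝔭' t).mpr ht)
  have hmem1 : ∀ b : B, b ∈ 𝔭' → 1 ≤ addVal Bp (algebraMap B Bp b) := fun b hb =>
    one_le_addVal_of_not_isUnit
      (fun hu => ((IsLocalization.AtPrime.isUnit_to_map_iff Bp 𝔭' b).mp hu) hb)
  -- s ∈ 𝔭 and (s : B) ∈ 𝔭'
  have hs𝔭 : s ∈ 𝔭 := by
    by_contra hsc
    have hu : IsUnit (algebraMap A Ap s) :=
      (IsLocalization.AtPrime.isUnit_to_map_iff Ap 𝔭 s).mpr hsc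
    have hmem : algebraMap A Ap s ∈ IsLocalRing.maximalIdeal Ap := by
      rw [hs]
      exact Ideal.mem_span_singleton_self _
    exact ((IsLocalRing.mem_maximalIdeal _).mp hmem) hu
  have hs𝔭' : (s : B) ∈ 𝔭' := by
    rw [← hover] at hs𝔭
    exact hs𝔭
  -- an element b1 of B with v b1 = 1
  obtain ⟨ϖ, hϖ⟩ := exists_irreducible Bp
  obtain ⟨⟨b1, t1⟩, ht1⟩ := IsLocalization.surj 𝔭'.primeCompl ϖ
  have hvb1 : addVal Bp (algebraMap B Bp b1) = 1 := by
    rw [← ht1, addVal_mul, addVal_uniformizer hϖ, hunit0 t1 t1.2, add_zero]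
  have hb1mem : b1 ∈ 𝔭' := by
    by_contra hb
    rw [hunit0 b1 hb] at hvb1
    exact (by simp : (0:ℕ∞) ≠ 1) hvb1
  -- the norm of b1 lies in A and has valuation 2
  have haA : b1 * σ b1 ∈ A := by
    rw [hA]
    show σ (b1 * σ b1) = b1 * σ b1
    rw [map_mul, hinv]
    ring
  set aA : A := ⟨b1 * σ b1, haA⟩ with haAdef
  have hva : addVal Bp (algebraMap B Bp (aA : B)) = 2 := by
    show addVal Bp (algebraMap B Bp (b1 * σ b1)) = 2
    rw [map_mul, addVal_mul, hvσ b1, hvb1]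
    rfl
  have haA𝔭 : aA ∈ 𝔭 := by
    rw [← hover]
    exact Ideal.mul_mem_right _ _ hb1mem
  -- write aA * u = s * a' in A
  have hmax : algebraMap A Ap aA ∈ IsLocalRing.maximalIdeal Ap :=
    (IsLocalization.AtPrime.to_map_mem_maximal_iff Ap 𝔭 aA).mpr haA𝔭
  rw [hs, Ideal.mem_span_singleton] at hmax
  obtain ⟨x, hx⟩ := hmax
  obtain ⟨⟨a', u⟩, hu⟩ := IsLocalization.surj 𝔭.primeCompl x
  have key : aA * u = s * a' := by
    apply injA
    rw [map_mul, map_mul, hx, mul_assoc, hu]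
  have keyB : (aA : B) * ((u : A) : B) = (s : B) * ((a' : A) : B) := by
    exact_mod_cast congrArg (fun z : A => (z : B)) key
  have hvu : addVal Bp (algebraMap B Bp ((u : A) : B)) = 0 := by
    apply hunit0
    intro hmem
    have hmem2 : (u : A) ∈ Ideal.comap A.subtype 𝔭' := hmem
    rw [hover] at hmem2
    exact u.2 hmem2
  have heq2 : (2 : ℕ∞) = addVal Bp (algebraMap B Bp (s : B))
      + addVal Bp (algebraMap B Bp ((a' : A) : B)) := by
    have h : addVal Bp (algebraMap B Bp (aA : B) * algebraMap B Bp ((u : A) : B))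
        = addVal Bp (algebraMap B Bp (s : B) * algebraMap B Bp ((a' : A) : B)) := by
      rw [← map_mul, ← map_mul, keyB]
    rw [addVal_mul, addVal_mul, hva, hvu, add_zero] at h
    exact h
  -- v s ≠ 1
  have hne1 : addVal Bp (algebraMap B Bp (s : B)) ≠ 1 := by
    intro hvs1
    have hSirr : Irreducible (algebraMap B Bp (s : B)) := irreducible_of_addVal_eq_one hvs1
    obtain ⟨b0, hb0⟩ := hnontriv
    set c : B := σ b0 - b0 with hcdef
    have hcσ : σ c = -c := by
      rw [hcdef, map_sub, hinv]
      ring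
    have hcne : c ≠ 0 := sub_ne_zero.mpr hb0
    have hC : algebraMap B Bp c ≠ 0 := fun h => hcne (injB (by rw [h, map_zero]))
    obtain ⟨n, u', hdec⟩ := eq_unit_mul_pow_irreducible hC hSirr
    have hφS : φ (algebraMap B Bp (s : B)) = algebraMap B Bp (s : B) := by
      rw [hφ, hfix]
    have hφu : φ (u' : Bp) = -(u' : Bp) := by
      have h1 : φ (algebraMap B Bp c) = -(algebraMap B Bp c) := by
        rw [hφ, hcσ, map_neg]
      rw [hdec, map_mul, map_pow, hφS] at h1
      have hpow : (algebraMap B Bp (s : B)) ^ n ≠ 0 := pow_ne_zero _ hSirr.ne_zero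
      apply mul_right_cancel₀ hpow
      rw [neg_mul]
      linear_combination h1
    -- contradiction: u' is a unit congruent to -u' mod the maximal ideal
    obtain ⟨⟨b, t⟩, htt⟩ := IsLocalization.surj 𝔭'.primeCompl (u' : Bp)
    have htσ : φ ((u' : Bp) * algebraMap B Bp (t : B)) = φ (algebraMap B Bp b) := by rw [htt]
    rw [map_mul, hφu, hφ, hφ] at htσ
    have hsum : (u' : Bp) * algebraMap B Bp ((t : B) + σ (t : B))
        = algebraMap B Bp (b - σ b) := by
      rw [map_add, map_sub, mul_add, htt]
      have : -(u' : Bp) * algebraMap B Bp (σ (t : B)) = algebraMap B Bp (σ b) := htσ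
      linear_combination -this
    have hts : (t : B) + σ (t : B) ∉ 𝔭' := by
      intro hmem
      have h2t : 2 * (t : B) ∈ 𝔭' := by
        have hd : σ (t : B) - (t : B) ∈ 𝔭' := htriv _
        have : 2 * (t : B) = ((t : B) + σ (t : B)) - (σ (t : B) - (t : B)) := by ring
        rw [this]
        exact Ideal.sub_mem _ hmem hd
      rcases h𝔭'.mem_or_mem h2t with h | h
      · exact (h𝔭'.ne_top (Ideal.eq_top_of_isUnit_mem _ h h2))
      · exact t.2 h
    have hwunit : IsUnit (algebraMap B Bp ((t : B) + σ (t : B))) :=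
      (IsLocalization.AtPrime.isUnit_to_map_iff Bp 𝔭' _).mpr hts
    have hrhs : algebraMap B Bp (b - σ b) ∈ IsLocalRing.maximalIdeal Bp := by
      refine (IsLocalization.AtPrime.to_map_mem_maximal_iff Bp 𝔭' _).mpr ?_
      have := htriv b
      have hmem : -(σ b - b) ∈ 𝔭' := neg_mem this
      rwa [neg_sub] at hmem
    have humem : (u' : Bp) ∈ IsLocalRing.maximalIdeal Bp := by
      obtain ⟨w, hw⟩ := hwunit
      have : (u' : Bp) * (w : Bp) ∈ IsLocalRing.maximalIdeal Bp := by
        rw [hw, hsum]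
        exact hrhs
      have h3 := Ideal.mul_mem_right (((w⁻¹ : Bpˣ) : Bp)) _ this
      rwa [mul_assoc, w.mul_inv, mul_one] at h3
    exact ((IsLocalRing.mem_maximalIdeal _).mp humem) u'.isUnit
  -- finish: 1 ≤ v s ≤ 2, v s ≠ 1
  have hge1 : 1 ≤ addVal Bp (algebraMap B Bp (s : B)) := hmem1 _ hs𝔭'
  have hle2 : addVal Bp (algebraMap B Bp (s : B)) ≤ 2 := heq2 ▸ le_self_add
  have hnetop : addVal Bp (algebraMap B Bp (s : B)) ≠ ⊤ := by
    intro h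
    rw [h] at hle2
    exact absurd (top_le_iff.mp hle2) (by simp)
  have hlt : 1 < addVal Bp (algebraMap B Bp (s : B)) := lt_of_le_of_ne hge1 (Ne.symm hne1)
  have hge2 : 2 ≤ addVal Bp (algebraMap B Bp (s : B)) := by
    have h := Order.add_one_le_of_lt hlt
    rwa [(by norm_num : (1 : ℕ∞) + 1 = 2)] at h
  exact le_antisymm hle2 hge2
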